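/- Let q, b, t be positive integers and Δ a positive real with q > 3b ≥ 8, 4bΔ ≤ t, and t ≤ q/(e·b) − q·ln(q)/(e·b²·Δ). Then ∏_{i=t}^{⌊q/b⌋} (1 − 4bΔ/i) ≤ q^(−4). -/

import Mathlib

lemma log_succ_le_inv (n : ℕ) (hn : 0 < n) :
    Real.log ((n : ℝ) + 1) - Real.log n ≤ (n : ℝ)⁻¹ := by
  have hn' : (0:ℝ) < n := by exact_mod_cast hn
  have h := Real.log_le_sub_one_of_pos (show (0:ℝ) < ((n:ℝ)+1)/n by positivity)
  rw [Real.log_div (by positivity) (ne_of_gt hn')] at h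
  have h2 : ((n:ℝ)+1)/n - 1 = (n:ℝ)⁻¹ := by field_simp; ring
  linarith

lemma harmonic_ge (t : ℕ) (ht : 0 < t) (M : ℕ) (htM : t ≤ M) :
    Real.log ((M : ℝ) + 1) - Real.log t ≤ ∑ i ∈ Finset.Icc t M, (i:ℝ)⁻¹ := by
  induction M, htM using Nat.le_induction with
  | base =>
    simpa using log_succ_le_inv t ht
  | succ M hM ih =>
    rw [Finset.sum_Icc_succ_top (le_trans hM (Nat.le_succ M))]
    have h := log_succ_le_inv (M+1) (by omega)
    push_cast at h ⊢
    linarith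

theorem stmt_9 (q b t : ℕ) (hq : 0 < q) (hb : 0 < b) (ht : 0 < t) (Δ : ℝ) (hΔ : 0 < Δ)
    (hqb : 3 * b < q) (hb8 : 8 ≤ 3 * b) (htΔ : 4 * (b : ℝ) * Δ ≤ (t : ℝ))
    (htu : (t : ℝ) ≤ (q : ℝ) / (Real.exp 1 * b) -
      (q : ℝ) * Real.log q / (Real.exp 1 * (b : ℝ) ^ 2 * Δ)) :
    ∏ i ∈ Finset.Icc t (q / b), (1 - 4 * (b : ℝ) * Δ / (i : ℝ)) ≤ ((q : ℝ) ^ 4)⁻¹ := by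
  have hbR : (0:ℝ) < b := by exact_mod_cast hb
  have hqR : (0:ℝ) < q := by exact_mod_cast hq
  have htR : (0:ℝ) < t := by exact_mod_cast ht
  have he : (0:ℝ) < Real.exp 1 := Real.exp_pos 1
  set L := Real.log q with hLdef
  have hL0 : 0 ≤ L := Real.log_nonneg (by exact_mod_cast hq)
  set A := L / ((b:ℝ) * Δ) with hAdef
  have hA0 : 0 ≤ A := by positivity
  -- step 1: b * t ≤ q * exp (-(1+A))
  have hbt : (b:ℝ) * t ≤ q * Real.exp (-(1+A)) := by
    have h1 : (b:ℝ) * t ≤ (q:ℝ)/Real.exp 1 * (1 - A) := by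
      have hmul := mul_le_mul_of_nonneg_left htu hbR.le
      have heq : (b:ℝ) * ((q : ℝ) / (Real.exp 1 * b) -
          (q : ℝ) * L / (Real.exp 1 * (b : ℝ) ^ 2 * Δ)) = (q:ℝ)/Real.exp 1 * (1 - A) := by
        rw [hAdef]; field_simp
      linarith [heq ▸ hmul]
    have h2 : 1 - A ≤ Real.exp (-A) := by
      have := Real.add_one_le_exp (-A); linarith
    calc (b:ℝ)*t ≤ (q:ℝ)/Real.exp 1 * (1-A) := h1
      _ ≤ (q:ℝ)/Real.exp 1 * Real.exp (-A) := by
          exact mul_le_mul_of_nonneg_left h2 (by positivity)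
      _ = q * Real.exp (-(1+A)) := by
          rw [show -(1+A) = (-1) + (-A) by ring, Real.exp_add, Real.exp_neg 1]
          ring
  -- step 2: log b + log t ≤ L - (1 + A)
  have hlogbt : Real.log b + Real.log t ≤ L - (1 + A) := by
    have h := Real.log_le_log (by positivity : (0:ℝ) < (b:ℝ)*t) hbt
    rw [Real.log_mul (ne_of_gt hbR) (ne_of_gt htR),
        Real.log_mul (ne_of_gt hqR) (ne_of_gt (Real.exp_pos _)), Real.log_exp] at h
    linarith
  -- step 3: t ≤ q / b in ℕ
  set M := q / b with hMdef
  have hexp1 : Real.exp (-(1+A)) ≤ 1 := by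
    rw [Real.exp_le_one_iff]; linarith
  have hbtq : (b:ℝ) * t ≤ q := by
    calc (b:ℝ)*t ≤ q * Real.exp (-(1+A)) := hbt
      _ ≤ q * 1 := mul_le_mul_of_nonneg_left hexp1 hqR.le
      _ = q := mul_one _
  have htM : t ≤ M := by
    rw [hMdef, Nat.le_div_iff_mul_le hb]
    exact_mod_cast (by linarith : (t:ℝ) * b ≤ q)
  -- step 4: log(M+1) ≥ log q - log b
  have hM1 : (q:ℝ)/b ≤ (M:ℝ)+1 := by
    have h1 : q < b * (M + 1) := Nat.lt_mul_div_succ q hb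
    have h1R : (q:ℝ) < b * ((M:ℝ)+1) := by exact_mod_cast h1
    rw [div_le_iff₀ hbR]
    linarith
  have hlogM : L - Real.log b ≤ Real.log ((M:ℝ)+1) := by
    rw [← Real.log_div (ne_of_gt hqR) (ne_of_gt hbR)]
    exact Real.log_le_log (by positivity) hM1
  -- step 5: key inequality
  have hkey : 4 * L ≤ (4*(b:ℝ)*Δ) * (Real.log ((M:ℝ)+1) - Real.log t) := by
    have h1 : 1 + A ≤ Real.log ((M:ℝ)+1) - Real.log t := by linarith
    have h2 : (4*(b:ℝ)*Δ) * (1 + A) = 4*(b:ℝ)*Δ + 4*L := by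
      rw [hAdef]; field_simp
    have h3 := mul_le_mul_of_nonneg_left h1 (show (0:ℝ) ≤ 4*(b:ℝ)*Δ by positivity)
    nlinarith
  -- step 6: product bound
  have hprod : ∏ i ∈ Finset.Icc t M, (1 - 4*(b:ℝ)*Δ/(i:ℝ)) ≤
      Real.exp (-(4*(b:ℝ)*Δ * ∑ i ∈ Finset.Icc t M, (i:ℝ)⁻¹)) := by
    have hrw : -(4*(b:ℝ)*Δ * ∑ i ∈ Finset.Icc t M, (i:ℝ)⁻¹)
        = ∑ i ∈ Finset.Icc t M, -(4*(b:ℝ)*Δ * (i:ℝ)⁻¹) := by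
      rw [Finset.mul_sum, ← Finset.sum_neg_distrib]
    rw [hrw, Real.exp_sum]
    apply Finset.prod_le_prod
    · intro i hi
      have hit : t ≤ i := (Finset.mem_Icc.mp hi).1
      have hitR : (t:ℝ) ≤ i := by exact_mod_cast hit
      have hi0 : (0:ℝ) < i := lt_of_lt_of_le htR hitR
      have hle : 4*(b:ℝ)*Δ/(i:ℝ) ≤ 1 := by
        rw [div_le_one hi0]; linarith
      linarith
    · intro i hi
      have hit : t ≤ i := (Finset.mem_Icc.mp hi).1
      have hitR : (t:ℝ) ≤ i := by exact_mod_cast hit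
      have hi0 : (0:ℝ) < i := lt_of_lt_of_le htR hitR
      have h := Real.add_one_le_exp (-(4*(b:ℝ)*Δ * (i:ℝ)⁻¹))
      have h2 : 4*(b:ℝ)*Δ/(i:ℝ) = 4*(b:ℝ)*Δ * (i:ℝ)⁻¹ := div_eq_mul_inv _ _
      linarith
  -- step 7: combine
  have hsum := harmonic_ge t ht M htM
  have hfinal : Real.exp (-(4*(b:ℝ)*Δ * ∑ i ∈ Finset.Icc t M, (i:ℝ)⁻¹))
      ≤ Real.exp (-(4*L)) := by
    apply Real.exp_le_exp.mpr
    have h3 := mul_le_mul_of_nonneg_left hsum (show (0:ℝ) ≤ 4*(b:ℝ)*Δ by positivity)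
    linarith
  have hqpow : Real.exp (-(4*L)) = ((q:ℝ)^4)⁻¹ := by
    rw [Real.exp_neg, show (4:ℝ)*L = ((4:ℕ):ℝ)*L by norm_num, Real.exp_nat_mul,
      Real.exp_log hqR]
  calc ∏ i ∈ Finset.Icc t M, (1 - 4*(b:ℝ)*Δ/(i:ℝ))
      ≤ Real.exp (-(4*(b:ℝ)*Δ * ∑ i ∈ Finset.Icc t M, (i:ℝ)⁻¹)) := hprod
    _ ≤ Real.exp (-(4*L)) := hfinal
    _ = ((q:ℝ)^4)⁻¹ := hqpow
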